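/- Let $L$, $a_k$ be as above and let $q=-a_k$ for some $1\le k\le N-1$. Then the set of minimizers of $f(v)=L(v)+qv$ over $[-1,1]$ is exactly the interval $[U_k,U_{k+1}]$. -/

import Mathlib

/-- with paper indices `1 ≤ k ≤ N - 1` (here `N = n + 2`, so `1 ≤ k ≤ n + 1`),
if `q = -a_k` then the set of minimizers of `f v = L v + q v` over `[-1,1]` is exactly
`[U_k, U_{k+1}]` (Lean: `[U ⟨k-1⟩, U ⟨k⟩]`). -/
theorem stmt_4 (n : ℕ) (U w : Fin (n + 2) → ℝ)
    (hU : StrictMono U) (hU0 : 0 ≤ U 0) (hUN : U (Fin.last (n + 1)) = 1)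
    (hw : ∀ i, 0 < w i) (hws : ∑ i, w i = 1)
    (k : ℕ) (hk1 : 1 ≤ k) (hk2 : k ≤ n + 1)
    (q : ℝ)
    (hq : q = -(2 * ∑ i ∈ Finset.univ.filter (fun i : Fin (n + 2) => (i : ℕ) < k), w i))
    (f : ℝ → ℝ) (hf : ∀ v, f v = (∑ i, w i * (|v - U i| + |v + U i|)) + q * v) :
    {v ∈ Set.Icc (-1 : ℝ) 1 | ∀ y ∈ Set.Icc (-1 : ℝ) 1, f v ≤ f y}
      = Set.Icc (U ⟨k - 1, by omega⟩) (U ⟨k, by omega⟩) := by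
  have hkm1 : k - 1 < n + 2 := by omega
  have hkk : k < n + 2 := by omega
  set km1 : Fin (n + 2) := ⟨k - 1, hkm1⟩ with hkm1def
  set kk : Fin (n + 2) := ⟨k, hkk⟩ with hkkdef
  have hUnn : ∀ i, 0 ≤ U i := fun i => le_trans hU0 (hU.monotone (Fin.zero_le i))
  have hU1 : ∀ i, U i ≤ 1 := fun i => hUN ▸ hU.monotone (Fin.le_last i)
  have hkm1kk : U km1 ≤ U kk := hU.monotone (Fin.mk_le_mk.mpr (by omega))
  set C : ℝ := 2 * ∑ i ∈ Finset.univ.filter (fun i : Fin (n + 2) => ¬ (i : ℕ) < k), w i * U i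
    with hCdef
  set t : ℝ → Fin (n + 2) → ℝ :=
    fun v i => w i * (|v - U i| + |v + U i|) -
      (if (i : ℕ) < k then 2 * w i * v else 2 * w i * U i) with htdef
  -- the decomposition
  have hfC : ∀ v, f v = C + ∑ i, t v i := by
    intro v
    have h2 : ∑ i ∈ Finset.univ.filter (fun i : Fin (n + 2) => (i : ℕ) < k), 2 * w i * v
        = 2 * (∑ i ∈ Finset.univ.filter (fun i : Fin (n + 2) => (i : ℕ) < k), w i) * v := by
      rw [Finset.mul_sum, Finset.sum_mul]
    have h3 : ∑ i ∈ Finset.univ.filter (fun i : Fin (n + 2) => ¬ (i : ℕ) < k), 2 * w i * U i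
        = C := by
      rw [hCdef, Finset.mul_sum]
      exact Finset.sum_congr rfl fun i _ => by ring
    have h1 : ∑ i : Fin (n + 2), (if (i : ℕ) < k then 2 * w i * v else 2 * w i * U i)
        = -(q * v) + C := by
      rw [Finset.sum_ite, h2, h3, hq]; ring
    have h4 : ∑ i : Fin (n + 2), t v i = (∑ i : Fin (n + 2), w i * (|v - U i| + |v + U i|)) -
        ∑ i : Fin (n + 2), (if (i : ℕ) < k then 2 * w i * v else 2 * w i * U i) :=
      Finset.sum_sub_distrib _ _
    rw [hf, h4, h1]; ring
  -- nonnegativity of each term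
  have htnn : ∀ v i, 0 ≤ t v i := by
    intro v i
    simp only [htdef]
    split_ifs with h
    · have h1 : 0 ≤ |v - U i| + |v + U i| - 2 * v := by
        have := le_abs_self (v - U i); have := le_abs_self (v + U i); linarith
      nlinarith [mul_nonneg (hw i).le h1]
    · have h1 : 0 ≤ |v - U i| + |v + U i| - 2 * U i := by
        have := neg_abs_le (v - U i); have := le_abs_self (v + U i); linarith
      nlinarith [mul_nonneg (hw i).le h1]
  -- vanishing on the interval
  have hteq : ∀ v, U km1 ≤ v → v ≤ U kk → ∀ i, t v i = 0 := by
    intro v hv1 hv2 i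
    have hv0 : 0 ≤ v := le_trans (hUnn km1) hv1
    simp only [htdef]
    split_ifs with h
    · have hUi : U i ≤ U km1 := hU.monotone (Fin.le_def.mpr (show (i : ℕ) ≤ k - 1 by omega))
      have h1 : |v - U i| = v - U i := abs_of_nonneg (by linarith)
      have h2 : |v + U i| = v + U i := abs_of_nonneg (by linarith [hUnn i])
      rw [h1, h2]; ring
    · have hUi : U kk ≤ U i := hU.monotone (Fin.le_def.mpr (show k ≤ (i : ℕ) by omega))
      have h1 : |v - U i| = -(v - U i) := abs_of_nonpos (by linarith)
      have h2 : |v + U i| = v + U i := abs_of_nonneg (by linarith [hUnn i])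
      rw [h1, h2]; ring
  have hfUkk : f (U kk) = C := by
    rw [hfC, Finset.sum_eq_zero fun i _ => hteq (U kk) hkm1kk le_rfl i]; ring
  show _ = Set.Icc (U km1) (U kk)
  ext v
  simp only [Set.mem_setOf_eq, Set.mem_Icc]
  constructor
  · rintro ⟨⟨hv1, hv2⟩, hmin⟩
    have h1 : f v ≤ C := hfUkk ▸ hmin _ ⟨by linarith [hUnn kk], hU1 kk⟩
    have h4 : ∑ i, t v i = 0 := by
      have h3 := Finset.sum_nonneg fun i (_ : i ∈ Finset.univ) => htnn v i
      have := hfC v; linarith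
    have h5 := (Finset.sum_eq_zero_iff_of_nonneg fun i _ => htnn v i).mp h4
    have h6 := h5 km1 (Finset.mem_univ _)
    have h7 := h5 kk (Finset.mem_univ _)
    simp only [htdef] at h6 h7
    rw [if_pos (show ((km1 : Fin (n + 2)) : ℕ) < k by simp [hkm1def]; omega)] at h6
    rw [if_neg (show ¬ ((kk : Fin (n + 2)) : ℕ) < k by simp [hkkdef])] at h7
    have hS1 : |v - U km1| + |v + U km1| = 2 * v := by
      have := mul_left_cancel₀ (ne_of_gt (hw km1))
        (show w km1 * (|v - U km1| + |v + U km1|) = w km1 * (2 * v) by linear_combination h6)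
      exact this
    have hS2 : |v - U kk| + |v + U kk| = 2 * U kk := by
      have := mul_left_cancel₀ (ne_of_gt (hw kk))
        (show w kk * (|v - U kk| + |v + U kk|) = w kk * (2 * U kk) by linear_combination h7)
      exact this
    constructor
    · have := neg_abs_le (v - U km1); have := le_abs_self (v + U km1); linarith
    · have := le_abs_self (v - U kk); have := le_abs_self (v + U kk); linarith
  · rintro ⟨hv1, hv2⟩
    have hv0 : 0 ≤ v := le_trans (hUnn km1) hv1
    refine ⟨⟨by linarith, le_trans hv2 (hU1 kk)⟩, fun y hy => ?_⟩
    rw [hfC v, hfC y, Finset.sum_eq_zero fun i _ => hteq v hv1 hv2 i]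
    have := Finset.sum_nonneg fun i (_ : i ∈ Finset.univ) => htnn y i
    linarith
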